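/- Let P be a preorder and suppose that for each n ∈ ℕ, σ_n is a strategy for Adam in the descending-chain game on P. Then there exists a strategy σ for Adam such that for every infinite run p_0 ≥ p_1 ≥ ⋯ played according to σ and every n ∈ ℕ, there exists an infinite run q_0 ≥ q_1 ≥ ⋯ played according to σ_n that generates the same filter as (p_i)_{i∈ℕ}. Consequently, if A_n ⊆ ℝ are sets such that σ_n is a winning strategy for Adam in G(A_n) for each n, then σ is a winning strategy for Adam in G(⋃_{n∈ℕ} A_n). -/

import Mathlib

/-- Baire space. -/
abbrev BaireR : Type := ℕ → ℕ

section Game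

variable {P : Type*} [Preorder P]

/-- A coded name for a real on the preorder `P`: a family `B n m` of sets of conditions
such that conditions deciding different values at the same coordinate are incompatible. -/
def CodedName (B : ℕ → ℕ → Set P) : Prop :=
  ∀ n m m', m ≠ m' → ∀ p ∈ B n m, ∀ p' ∈ B n m', ¬ ∃ q, q ≤ p ∧ q ≤ p'

/-- The filter generated by a descending sequence of conditions. -/
def genFilter (p : ℕ → P) : Set P := {q | ∃ i, p i ≤ q}

/-- A strategy for Adam: given the list of earlier moves and the last move played,
it produces Adam's next move.  It must be a legal move (below everything played so far)
at every descending position where it is Adam's turn, i.e. positions of odd length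
`l ++ [q]` (so `l` has even length). -/
def IsAdamStrategy (σ : List P → P → P) : Prop :=
  ∀ (l : List P) (q : P), (l ++ [q]).Chain' (fun a b => b ≤ a) → l.length % 2 = 0 →
    σ l q ≤ q ∧ ∀ r ∈ l, σ l q ≤ r

/-- A strategy for Eve: a function assigning to each position at which it is Eve's turn
(descending positions of even length, including the empty one) a condition below all
conditions played so far. -/
def IsEveStrategy (τ : List P → P) : Prop :=
  ∀ l : List P, l.Chain' (fun a b => b ≤ a) → l.length % 2 = 0 →
    ∀ r ∈ l, τ l ≤ r

/-- An infinite run `p 0 ≥ p 1 ≥ ⋯` is played according to Adam's strategy `σ`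
if each odd-indexed move is produced by `σ` from the preceding position. -/
def FollowsAdam (σ : List P → P → P) (p : ℕ → P) : Prop :=
  ∀ k, p (2 * k + 1) = σ (List.ofFn fun i : Fin (2 * k) => p i) (p (2 * k))

/-- An infinite run is played according to Eve's strategy `τ` if each even-indexed move
is produced by `τ` from the preceding position. -/
def FollowsEve (τ : List P → P) (p : ℕ → P) : Prop :=
  ∀ k, p (2 * k) = τ (List.ofFn fun i : Fin (2 * k) => p i)

/-- Eve wins the run `p` of the game `G(A)` if the generated filter evaluates the
name `B` and the valuation belongs to `A`. -/
def EveWinsRun (B : ℕ → ℕ → Set P) (A : Set BaireR) (p : ℕ → P) : Prop :=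
  ∃ x : BaireR, (∀ n, (genFilter p ∩ B n (x n)).Nonempty) ∧ x ∈ A

/-- Adam has a winning strategy in the game `G(A)`;
equivalently, `A` belongs to the collection `I_P`. -/
def AdamHasWinning (B : ℕ → ℕ → Set P) (A : Set BaireR) : Prop :=
  ∃ σ : List P → P → P, IsAdamStrategy σ ∧
    ∀ p : ℕ → P, Antitone p → FollowsAdam σ p → ¬ EveWinsRun B A p

/-- Eve has a winning strategy in the game `G(A)`. -/
def EveHasWinning (B : ℕ → ℕ → Set P) (A : Set BaireR) : Prop :=
  ∃ τ : List P → P, IsEveStrategy τ ∧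
    ∀ p : ℕ → P, Antitone p → FollowsEve τ p → EveWinsRun B A p

end Game

/-- Index translation for the fused strategy: the `m`-th move of the simulated run
of strategy `n` sits at position `fuseIdx n m` of the actual run. -/
def fuseIdx (n m : ℕ) : ℕ := 2 * Nat.pair n (m / 2) + m % 2

lemma fuseIdx_strictMono (n : ℕ) : StrictMono (fuseIdx n) := by
  apply strictMono_nat_of_lt_succ
  intro m
  rcases Nat.even_or_odd m with ⟨i, hi⟩ | ⟨i, hi⟩
  · have h1 : m / 2 = i := by omega
    have h2 : (m + 1) / 2 = i := by omega
    have h3 : m % 2 = 0 := by omega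
    have h4 : (m + 1) % 2 = 1 := by omega
    simp [fuseIdx, h1, h2, h3, h4]
  · have h1 : m / 2 = i := by omega
    have h2 : (m + 1) / 2 = i + 1 := by omega
    have h3 : m % 2 = 1 := by omega
    have h4 : (m + 1) % 2 = 0 := by omega
    have := Nat.pair_lt_pair_right n (show i < i + 1 by omega)
    simp only [fuseIdx, h1, h2, h3, h4]
    omega

lemma fuseIdx_lt (n j t : ℕ) (ht : t < 2 * j) : fuseIdx n t < 2 * Nat.pair n j := by
  have h1 : t / 2 < j := by omega
  have := Nat.pair_lt_pair_right n h1
  have h2 : t % 2 ≤ 1 := by omega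
  simp only [fuseIdx]
  omega

lemma fuseIdx_two_mul (n i : ℕ) : fuseIdx n (2 * i) = 2 * Nat.pair n i := by
  have h1 : 2 * i / 2 = i := by omega
  have h2 : 2 * i % 2 = 0 := by omega
  simp [fuseIdx, h1, h2]

lemma fuseIdx_two_mul_add_one (n i : ℕ) :
    fuseIdx n (2 * i + 1) = 2 * Nat.pair n i + 1 := by
  have h1 : (2 * i + 1) / 2 = i := by omega
  have h2 : (2 * i + 1) % 2 = 1 := by omega
  simp [fuseIdx, h1, h2]

/-- The fused strategy. -/
def fuseσ {P : Type*} [Preorder P] (σs : ℕ → List P → P → P) (l : List P) (q : P) : P :=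
  σs (Nat.unpair (l.length / 2)).1
    (List.ofFn (fun t : Fin (2 * (Nat.unpair (l.length / 2)).2) =>
      l.getD (fuseIdx (Nat.unpair (l.length / 2)).1 t) q)) q

lemma fuseσ_eq {P : Type*} [Preorder P] (σs : ℕ → List P → P → P) (n j : ℕ)
    (l : List P) (hl : l.length = 2 * Nat.pair n j) (q : P) :
    fuseσ σs l q = σs n (List.ofFn fun t : Fin (2 * j) => l.getD (fuseIdx n t) q) q := by
  have h1 : l.length / 2 = Nat.pair n j := by omega
  simp only [fuseσ, h1, Nat.unpair_pair, Fin.coe_cast]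

/-- fusing countably many Adam strategies into one: there is a single
strategy `σ` for Adam such that every run according to `σ` generates, for each `n`,
the same filter as some run according to `σs n`; consequently, if each `σs n` is
winning for Adam in `G(A n)`, then `σ` is winning for Adam in `G(⋃ n, A n)`. -/

theorem stmt_1 {P : Type*} [Preorder P]
    (B : ℕ → ℕ → Set P) (hB : CodedName B)
    (σs : ℕ → List P → P → P) (hσs : ∀ n, IsAdamStrategy (σs n)) :
    ∃ σ : List P → P → P, IsAdamStrategy σ ∧
      (∀ p : ℕ → P, Antitone p → FollowsAdam σ p → ∀ n, ∃ q : ℕ → P,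
        Antitone q ∧ FollowsAdam (σs n) q ∧ genFilter q = genFilter p) ∧
      (∀ A : ℕ → Set BaireR,
        (∀ n, ∀ p : ℕ → P, Antitone p → FollowsAdam (σs n) p → ¬ EveWinsRun B (A n) p) →
        ∀ p : ℕ → P, Antitone p → FollowsAdam σ p → ¬ EveWinsRun B (⋃ n, A n) p) := by
  haveI : IsTrans P (fun a b : P => b ≤ a) := ⟨fun _ _ _ h1 h2 => h2.trans h1⟩
  have hstrat : IsAdamStrategy (fuseσ σs) := by
    intro l q hchain hlen
    obtain ⟨k, hk⟩ : ∃ k, l.length = 2 * k := ⟨l.length / 2, by omega⟩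
    set n := (Nat.unpair k).1 with hn
    set j := (Nat.unpair k).2 with hj
    have hl : l.length = 2 * Nat.pair n j := by rw [hn, hj, Nat.pair_unpair]; omega
    have hpw : (l ++ [q]).Pairwise (fun a b => b ≤ a) := List.isChain_iff_pairwise.mp hchain
    obtain ⟨hpl, -, hql⟩ := List.pairwise_append.mp hpw
    have hqle : ∀ r ∈ l, q ≤ r := fun r hr => hql r hr q (List.mem_singleton_self q)
    have hidx : ∀ t : ℕ, t < 2 * j → fuseIdx n t < l.length := fun t ht => by
      rw [hl]; exact fuseIdx_lt n j t ht
    have hsim : ((List.ofFn fun t : Fin (2 * j) => l.getD (fuseIdx n t) q) ++ [q]).Chain'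
        (fun a b => b ≤ a) := by
      refine List.isChain_iff_pairwise.mpr ?_
      rw [List.pairwise_append]
      refine ⟨List.pairwise_ofFn.mpr ?_, List.pairwise_singleton _ _, ?_⟩
      · intro a b hab
        rw [List.getD_eq_getElem l q (hidx a a.2), List.getD_eq_getElem l q (hidx b b.2)]
        exact List.pairwise_iff_getElem.mp hpl _ _ (hidx a a.2) (hidx b b.2)
          ((fuseIdx_strictMono n) (by exact_mod_cast hab))
      · intro a ha b hb
        rw [List.mem_singleton] at hb
        obtain ⟨t, rfl⟩ := List.mem_ofFn.mp ha
        rw [hb]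
        show q ≤ l.getD (fuseIdx n ↑t) q
        rw [List.getD_eq_getElem l q (hidx t t.2)]
        exact hqle _ (List.getElem_mem _)
    have hlen2 : (List.ofFn fun t : Fin (2 * j) => l.getD (fuseIdx n t) q).length % 2 = 0 := by
      simp [Nat.mul_mod_right]
    have hmain := hσs n _ q hsim hlen2
    rw [fuseσ_eq σs n j l hl q]
    exact ⟨hmain.1, fun r hr => hmain.1.trans (hqle r hr)⟩
  have hkey : ∀ p : ℕ → P, Antitone p → FollowsAdam (fuseσ σs) p → ∀ n, ∃ q : ℕ → P,
      Antitone q ∧ FollowsAdam (σs n) q ∧ genFilter q = genFilter p := by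
    intro p hp hfol n
    refine ⟨fun m => p (fuseIdx n m),
      fun a b hab => hp ((fuseIdx_strictMono n).monotone hab), ?_, ?_⟩
    · intro i
      have hk := hfol (Nat.pair n i)
      have hl : (List.ofFn fun t : Fin (2 * Nat.pair n i) => p t).length
          = 2 * Nat.pair n i := by simp
      rw [fuseσ_eq σs n i _ hl] at hk
      have he : (List.ofFn fun t : Fin (2 * i) =>
          (List.ofFn fun t : Fin (2 * Nat.pair n i) => p t).getD (fuseIdx n t)
            (p (2 * Nat.pair n i)))
          = List.ofFn fun t : Fin (2 * i) => p (fuseIdx n t) := by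
        congr 1
        funext t
        have htl : fuseIdx n t < (List.ofFn fun t : Fin (2 * Nat.pair n i) => p t).length := by
          rw [hl]; exact fuseIdx_lt n i t t.2
        rw [List.getD_eq_getElem _ _ htl, List.getElem_ofFn]
      rw [he] at hk
      show p (fuseIdx n (2 * i + 1))
          = σs n (List.ofFn fun t : Fin (2 * i) => p (fuseIdx n t)) (p (fuseIdx n (2 * i)))
      rw [fuseIdx_two_mul_add_one, fuseIdx_two_mul]
      exact hk
    · ext r
      simp only [genFilter, Set.mem_setOf_eq]
      constructor
      · rintro ⟨i, hi⟩; exact ⟨fuseIdx n i, hi⟩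
      · rintro ⟨i, hi⟩
        exact ⟨i, le_trans (hp (fuseIdx_strictMono n).le_apply) hi⟩
  refine ⟨fuseσ σs, hstrat, hkey, ?_⟩
  rintro A hA p hp hfol ⟨x, hx, hxU⟩
  obtain ⟨n, hxn⟩ := Set.mem_iUnion.mp hxU
  obtain ⟨q, hq1, hq2, hq3⟩ := hkey p hp hfol n
  exact hA n q hq1 hq2 ⟨x, fun m => by rw [hq3]; exact hx m, hxn⟩
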